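/- Let n ≥ 1, let Q, Q̂ ∈ ℝ^{n×n} be symmetric positive semidefinite matrices, let c, ĉ ∈ ℝ^n, and let J = {J_1, …, J_t} be a partition of {1,…,n} such that: (i) c_j = ĉ_j for all j and c_j takes the same value for all j in each class J_q; (ii) for every q, q' ∈ {1,…,t} and every j ∈ J_q, ∑_{j'∈J_{q'}} Q_{jj'} = ∑_{j'∈J_{q'}} Q̂_{jj'}, and this common value is the same for all j ∈ J_q. Then for every x ∈ ℝ^n, (1/2) xᵀQx + cᵀx ≥ (1/2) x̂ᵀQ̂x̂ + ĉᵀx̂, where x̂ is the J-average of x. -/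

import Mathlib

open Matrix

/-- The `J`-average of a vector `x`, where the partition of `{1,…,n}` is encoded by a
surjective map `π : Fin n → Fin t` (the class `J_q` is the fiber `π ⁻¹ {q}`):
`x̂ j = (1/|J_{π j}|) ∑_{j' ∈ J_{π j}} x j'`. -/
noncomputable def Javg {n t : ℕ} (π : Fin n → Fin t) (x : Fin n → ℝ) : Fin n → ℝ :=
  fun j => (∑ j' ∈ Finset.univ.filter (fun j' => π j' = π j), x j') /
    ((Finset.univ.filter (fun j' => π j' = π j)).card : ℝ)

lemma sum_comp_mul {n t : ℕ} (π : Fin n → Fin t) (Y : Fin t → ℝ) (z : Fin n → ℝ) :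
    ∑ j, Y (π j) * z j = ∑ q, Y q * ∑ j ∈ Finset.univ.filter (fun j => π j = q), z j := by
  rw [← Finset.sum_fiberwise Finset.univ π (fun j => Y (π j) * z j)]
  refine Finset.sum_congr rfl fun q _ => ?_
  rw [Finset.mul_sum]
  exact Finset.sum_congr rfl fun j hj => by rw [(Finset.mem_filter.mp hj).2]

lemma sum_fiber_javg {n t : ℕ} (π : Fin n → Fin t) (x : Fin n → ℝ) (q : Fin t) :
    ∑ j ∈ Finset.univ.filter (fun j => π j = q), Javg π x j =
    ∑ j ∈ Finset.univ.filter (fun j => π j = q), x j := by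
  by_cases h : (Finset.univ.filter (fun j => π j = q)).Nonempty
  · have hcard : ((Finset.univ.filter (fun j : Fin n => π j = q)).card : ℝ) ≠ 0 := by
      exact_mod_cast Finset.card_ne_zero_of_mem h.choose_spec
    have heq : ∀ j ∈ Finset.univ.filter (fun j => π j = q),
        Javg π x j = (∑ j' ∈ Finset.univ.filter (fun j' => π j' = q), x j') /
          ((Finset.univ.filter (fun j' : Fin n => π j' = q)).card : ℝ) := by
      intro j hj
      simp only [Javg, (Finset.mem_filter.mp hj).2]
    rw [Finset.sum_congr rfl heq, Finset.sum_const, nsmul_eq_mul]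
    field_simp
  · rw [Finset.not_nonempty_iff_eq_empty] at h
    rw [h]
    simp

/-- If `Q, Q̂` are symmetric positive semidefinite, `c = ĉ` is constant on each class of the
partition, and the class-wise row sums of `Q` and `Q̂` agree and are constant over each class,
then `(1/2) xᵀQx + cᵀx ≥ (1/2) x̂ᵀQ̂x̂ + ĉᵀx̂` for the `J`-average `x̂` of `x`. -/
theorem javg_objective_le {n t : ℕ} (hn : 1 ≤ n)
    (π : Fin n → Fin t) (hπ : Function.Surjective π)
    (Q Qhat : Matrix (Fin n) (Fin n) ℝ) (hQ : Q.PosSemidef) (hQhat : Qhat.PosSemidef)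
    (c chat : Fin n → ℝ)
    (hc : ∀ j, c j = chat j)
    (hcConst : ∀ j j₂ : Fin n, π j = π j₂ → c j = c j₂)
    (hQeq : ∀ (q' : Fin t) (j : Fin n),
      ∑ j' ∈ Finset.univ.filter (fun j' => π j' = q'), Q j j' =
      ∑ j' ∈ Finset.univ.filter (fun j' => π j' = q'), Qhat j j')
    (hQConst : ∀ (q' : Fin t) (j j₂ : Fin n), π j = π j₂ →
      ∑ j' ∈ Finset.univ.filter (fun j' => π j' = q'), Q j j' =
      ∑ j' ∈ Finset.univ.filter (fun j' => π j' = q'), Q j₂ j')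
    (x : Fin n → ℝ) :
    (1 / 2) * ((Javg π x) ⬝ᵥ Qhat.mulVec (Javg π x)) + chat ⬝ᵥ (Javg π x) ≤
      (1 / 2) * (x ⬝ᵥ Q.mulVec x) + c ⬝ᵥ x := by
  set xh := Javg π x with hxhdef
  set F : Fin t → ℝ := fun q => (∑ j' ∈ Finset.univ.filter (fun j' => π j' = q), x j') /
    ((Finset.univ.filter (fun j' : Fin n => π j' = q)).card : ℝ) with hF
  have hxh : ∀ j, xh j = F (π j) := fun j => rfl
  set σ := Function.surjInv hπ with hσ
  have hπσ : ∀ q, π (σ q) = q := fun q => Function.surjInv_eq hπ q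
  -- generic: replacing x by xh in weighted sums with class-constant weights
  have key : ∀ (Y : Fin t → ℝ), ∑ j, Y (π j) * xh j = ∑ j, Y (π j) * x j := by
    intro Y
    calc ∑ j, Y (π j) * xh j
        = ∑ q, Y q * ∑ j ∈ Finset.univ.filter (fun j => π j = q), xh j := sum_comp_mul π Y xh
      _ = ∑ q, Y q * ∑ j ∈ Finset.univ.filter (fun j => π j = q), x j :=
          Finset.sum_congr rfl fun q _ => by rw [hxhdef, sum_fiber_javg]
      _ = ∑ j, Y (π j) * x j := (sum_comp_mul π Y x).symm
  -- linear term
  have hlin : chat ⬝ᵥ xh = c ⬝ᵥ x := by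
    have hcrep : ∀ j, chat j = (fun q => c (σ q)) (π j) := by
      intro j
      rw [← hc]
      exact hcConst j (σ (π j)) (by rw [hπσ])
    simp only [dotProduct]
    calc ∑ j, chat j * xh j = ∑ j, (fun q => c (σ q)) (π j) * xh j := by
          exact Finset.sum_congr rfl fun j _ => by rw [hcrep]
      _ = ∑ j, (fun q => c (σ q)) (π j) * x j := key (fun q => c (σ q))
      _ = ∑ j, c j * x j := Finset.sum_congr rfl fun j _ => by
          rw [← hcrep, ← hc]
  -- mulVec of xh agrees for Q and Qhat
  have hmvform : ∀ (A : Matrix (Fin n) (Fin n) ℝ) (j : Fin n),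
      A.mulVec xh j = ∑ q, F q * ∑ j' ∈ Finset.univ.filter (fun j' => π j' = q), A j j' := by
    intro A j
    simp only [mulVec, dotProduct]
    calc ∑ j', A j j' * xh j' = ∑ j', F (π j') * A j j' := by
          exact Finset.sum_congr rfl fun j' _ => by rw [hxh, mul_comm]
      _ = _ := sum_comp_mul π F (fun j' => A j j')
  have hmv : ∀ j, Qhat.mulVec xh j = Q.mulVec xh j := by
    intro j
    rw [hmvform, hmvform]
    exact Finset.sum_congr rfl fun q _ => by rw [hQeq]
  -- Q.mulVec xh is class-constant
  set G : Fin t → ℝ := fun p => ∑ q, F q * ∑ j' ∈ Finset.univ.filter (fun j' => π j' = q), Q (σ p) j' with hG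
  have hGrep : ∀ j, Q.mulVec xh j = G (π j) := by
    intro j
    rw [hmvform]
    exact Finset.sum_congr rfl fun q _ => by
      rw [hQConst q j (σ (π j)) (by rw [hπσ])]
  -- xh ⬝ Q xh = xh ⬝ Q x
  have hquad : xh ⬝ᵥ Q.mulVec xh = xh ⬝ᵥ Q.mulVec x := by
    have h1 : xh ⬝ᵥ Q.mulVec xh = x ⬝ᵥ Q.mulVec xh := by
      simp only [dotProduct]
      calc ∑ j, xh j * Q.mulVec xh j = ∑ j, G (π j) * xh j := by
            exact Finset.sum_congr rfl fun j _ => by rw [hGrep, mul_comm]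
        _ = ∑ j, G (π j) * x j := key G
        _ = ∑ j, x j * Q.mulVec xh j := Finset.sum_congr rfl fun j _ => by
            rw [hGrep, mul_comm]
    have hQsymm : Qᵀ = Q := by simpa using hQ.1.eq
    have h2 : x ⬝ᵥ Q.mulVec xh = xh ⬝ᵥ Q.mulVec x := by
      rw [Matrix.dotProduct_mulVec, ← Matrix.mulVec_transpose, hQsymm, dotProduct_comm]
    rw [h1, h2]
  -- PSD inequality
  have hpsd : 0 ≤ (x - xh) ⬝ᵥ Q.mulVec (x - xh) := hQ.dotProduct_mulVec_nonneg (x - xh)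
  have hQsymm : Qᵀ = Q := by simpa using hQ.1.eq
  have hsym : x ⬝ᵥ Q.mulVec xh = xh ⬝ᵥ Q.mulVec x := by
    rw [Matrix.dotProduct_mulVec, ← Matrix.mulVec_transpose, hQsymm, dotProduct_comm]
  have hexpand : (x - xh) ⬝ᵥ Q.mulVec (x - xh) =
      x ⬝ᵥ Q.mulVec x - x ⬝ᵥ Q.mulVec xh - xh ⬝ᵥ Q.mulVec x + xh ⬝ᵥ Q.mulVec xh := by
    simp only [Matrix.mulVec_sub, sub_dotProduct, dotProduct_sub]
    ring
  have hQle : xh ⬝ᵥ Q.mulVec xh ≤ x ⬝ᵥ Q.mulVec x := by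
    rw [hexpand, hsym, hquad] at hpsd
    linarith
  have hhat : xh ⬝ᵥ Qhat.mulVec xh = xh ⬝ᵥ Q.mulVec xh := by
    simp only [dotProduct]
    exact Finset.sum_congr rfl fun j _ => by rw [hmv]
  rw [hhat, hlin]
  linarith
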